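/- Let C ∈ ℂ, let Ω ⊆ ℂ² be a nonempty connected open set, and let η : Ω → ℂ be holomorphic with ∂η/∂y ≠ 0 on Ω. Suppose that for all (x,y) ∈ Ω and all p ∈ ℂ: η_xx + 2p·η_xy + p²·η_yy + (6y² + x)·η_y = 6·η(x,y)² + (x + C). Then C = 0 and η(x,y) = y for all (x,y) ∈ Ω. -/

import Mathlib

open Metric

/-- A holomorphic function on a ball with vanishing derivative is constant. -/
lemma constOn_ball {f : ℂ → ℂ} {c : ℂ} {r : ℝ}
    (hf : DifferentiableOn ℂ f (Metric.ball c r))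
    (h' : ∀ x ∈ Metric.ball c r, deriv f x = 0) :
    ∀ x ∈ Metric.ball c r, f x = f c := by
  intro x hx
  have hc : c ∈ Metric.ball c r :=
    Metric.mem_ball_self (lt_of_le_of_lt dist_nonneg hx)
  refine (convex_ball c r).is_const_of_fderivWithin_eq_zero hf (fun z hz => ?_) hx hc
  rw [fderivWithin_of_isOpen isOpen_ball hz]
  refine ContinuousLinearMap.ext_ring ?_
  rw [fderiv_eq_smul_deriv, h' z hz]
  simp

/-- Partial derivative in the first variable of a function `ℂ × ℂ → ℂ`. -/
noncomputable def cpX (η : ℂ × ℂ → ℂ) (q : ℂ × ℂ) : ℂ :=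
  deriv (fun t => η (t, q.2)) q.1

/-- Partial derivative in the second variable of a function `ℂ × ℂ → ℂ`. -/
noncomputable def cpY (η : ℂ × ℂ → ℂ) (q : ℂ × ℂ) : ℂ :=
  deriv (fun t => η (q.1, t)) q.2

/-- The Φ₃-symmetry pseudo-group of the first Painlevé equation
`y'' = 6y² + x` is trivial: any symmetry `x̄ = x + C`, `ȳ = η(x,y)` has `C = 0`
and `η(x,y) = y`. -/
theorem statement7 (C : ℂ) (Ω : Set (ℂ × ℂ)) (hΩo : IsOpen Ω) (hΩc : IsConnected Ω)
    (η : ℂ × ℂ → ℂ) (hη : DifferentiableOn ℂ η Ω)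
    (hηy : ∀ q ∈ Ω, cpY η q ≠ 0)
    (hpde : ∀ q ∈ Ω, ∀ p : ℂ,
      cpX (cpX η) q + 2 * p * cpX (cpY η) q + p^2 * cpY (cpY η) q
        + (6 * q.2^2 + q.1) * cpY η q
      = 6 * (η q)^2 + (q.1 + C)) :
    C = 0 ∧ ∀ q ∈ Ω, η q = q.2 := by
  -- decompose the PDE (polynomial identity in p) into coefficients
  have hA : ∀ q ∈ Ω, cpY (cpY η) q = 0 := by
    intro q hq
    have h0 := hpde q hq 0
    have h1 := hpde q hq 1
    have hm := hpde q hq (-1)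
    linear_combination (h1 + hm - 2*h0)/2
  have hB : ∀ q ∈ Ω, cpX (cpY η) q = 0 := by
    intro q hq
    have h1 := hpde q hq 1
    have hm := hpde q hq (-1)
    linear_combination (h1 - hm)/4
  have hE : ∀ q ∈ Ω, cpX (cpX η) q + (6 * q.2^2 + q.1) * cpY η q
      = 6 * (η q)^2 + (q.1 + C) := by
    intro q hq
    have h0 := hpde q hq 0
    linear_combination h0
  -- local argument around an arbitrary point of Ω
  have key : ∀ q0 ∈ Ω, C = 0 ∧ η q0 = q0.2 := by
    rintro ⟨x0, y0⟩ hq0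
    obtain ⟨r, hr, hball⟩ := Metric.isOpen_iff.mp hΩo (x0, y0) hq0
    have hmem : ∀ {x y : ℂ}, x ∈ ball x0 r → y ∈ ball y0 r → (x, y) ∈ Ω := by
      intro x y hx hy
      exact hball (by rw [← ball_prod_same]; exact ⟨hx, hy⟩)
    have hy00 : y0 ∈ ball y0 r := mem_ball_self hr
    have hx00 : x0 ∈ ball x0 r := mem_ball_self hr
    -- slices are holomorphic
    have hslicey : ∀ x ∈ ball x0 r, DifferentiableOn ℂ (fun t => η (x, t)) (ball y0 r) := by
      intro x hx t ht
      have h1 : DifferentiableAt ℂ η (x, t) :=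
        hη.differentiableAt (hΩo.mem_nhds (hmem hx ht))
      exact (h1.comp t ((differentiableAt_const x).prodMk differentiableAt_id)).differentiableWithinAt
    have hslicex : ∀ y ∈ ball y0 r, DifferentiableOn ℂ (fun t => η (t, y)) (ball x0 r) := by
      intro y hy t ht
      have h1 : DifferentiableAt ℂ η (t, y) :=
        hη.differentiableAt (hΩo.mem_nhds (hmem ht hy))
      exact (h1.comp t (differentiableAt_id.prodMk (differentiableAt_const y))).differentiableWithinAt
    -- η is affine in y on the polydisc
    have haff : ∀ x ∈ ball x0 r, ∀ y ∈ ball y0 r,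
        η (x, y) = η (x, y0) + cpY η (x, y0) * (y - y0) := by
      intro x hx
      have hd := hslicey x hx
      have han : AnalyticOnNhd ℂ (fun t => η (x, t)) (ball y0 r) :=
        hd.analyticOnNhd isOpen_ball
      have hd' : DifferentiableOn ℂ (deriv (fun t => η (x, t))) (ball y0 r) :=
        han.deriv.differentiableOn
      have hder2 : ∀ t ∈ ball y0 r, deriv (deriv (fun s => η (x, s))) t = 0 := by
        intro t ht
        exact hA (x, t) (hmem hx ht)
      have hconst : ∀ t ∈ ball y0 r,
          deriv (fun s => η (x, s)) t = deriv (fun s => η (x, s)) y0 :=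
        constOn_ball hd' hder2
      set b := deriv (fun s => η (x, s)) y0 with hbdef
      have hg : DifferentiableOn ℂ (fun t => η (x, t) - b * t) (ball y0 r) :=
        hd.sub (by fun_prop)
      have hg' : ∀ t ∈ ball y0 r, deriv (fun t => η (x, t) - b * t) t = 0 := by
        intro t ht
        have h1 : DifferentiableAt ℂ (fun s => η (x, s)) t :=
          hd.differentiableAt (isOpen_ball.mem_nhds ht)
        rw [deriv_fun_sub h1 (by fun_prop), hconst t ht]
        have hdb : deriv (fun t => b * t) t = b := by
          simpa using ((hasDerivAt_id t).const_mul b).deriv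
        rw [hdb, sub_self]
      intro y hy
      have h2 := constOn_ball hg hg' y hy
      have hbb : cpY η (x, y0) = b := rfl
      rw [hbb]
      linear_combination h2
    -- the y-derivative is constant in x as well
    have hBdiff : DifferentiableOn ℂ (fun x => cpY η (x, y0)) (ball x0 r) := by
      have hy1 : (y0 + ((r : ℂ)/2)) ∈ ball y0 r := by
        simpa [Complex.dist_eq, abs_of_pos hr] using hr
      refine DifferentiableOn.congr
        (f := fun x => (η (x, y0 + ((r : ℂ)/2)) - η (x, y0)) / ((r : ℂ)/2))
        (((hslicex _ hy1).sub (hslicex _ hy00)).div_const _) ?_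
      intro x hx
      have h1 := haff x hx _ hy1
      have hrne : ((r : ℂ)/2) ≠ 0 := by
        simp only [ne_eq, div_eq_zero_iff]
        push_neg
        exact ⟨by exact_mod_cast hr.ne', by norm_num⟩
      have hrne2 := hrne
      rw [eq_div_iff hrne, h1]
      ring
    have hBderiv : ∀ x ∈ ball x0 r, deriv (fun x => cpY η (x, y0)) x = 0 := by
      intro x hx
      exact hB (x, y0) (hmem hx hy00)
    have hBconst : ∀ x ∈ ball x0 r, cpY η (x, y0) = cpY η (x0, y0) :=
      constOn_ball hBdiff hBderiv
    set b0 := cpY η (x0, y0) with hb0def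
    have hb0 : b0 ≠ 0 := hηy (x0, y0) hq0
    have haff2 : ∀ x ∈ ball x0 r, ∀ y ∈ ball y0 r,
        η (x, y) = η (x, y0) + b0 * (y - y0) := by
      intro x hx y hy
      rw [haff x hx y hy, hBconst x hx]
    -- cpY η is constantly b0 on the polydisc
    have hcpY : ∀ x ∈ ball x0 r, ∀ y ∈ ball y0 r, cpY η (x, y) = b0 := by
      intro x hx y hy
      have heq : (fun t => η (x, t)) =ᶠ[nhds y] (fun t => η (x, y0) + b0 * (t - y0)) :=
        Filter.eventuallyEq_of_mem (isOpen_ball.mem_nhds hy) (fun t ht => haff2 x hx t ht)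
      have : cpY η (x, y) = deriv (fun t => η (x, y0) + b0 * (t - y0)) y := heq.deriv_eq
      rw [this]
      have : HasDerivAt (fun t => η (x, y0) + b0 * (t - y0)) b0 y := by
        simpa using ((hasDerivAt_id y).sub_const y0).const_mul b0 |>.const_add (η (x, y0))
      exact this.deriv
    -- cpX η and cpX (cpX η) do not depend on y
    have hcpX : ∀ x ∈ ball x0 r, ∀ y ∈ ball y0 r, cpX η (x, y) = cpX η (x, y0) := by
      intro x hx y hy
      have heq : (fun t => η (t, y)) =ᶠ[nhds x] (fun t => η (t, y0) + b0 * (y - y0)) :=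
        Filter.eventuallyEq_of_mem (isOpen_ball.mem_nhds hx) (fun t ht => haff2 t ht y hy)
      have h1 : cpX η (x, y) = deriv (fun t => η (t, y0) + b0 * (y - y0)) x := heq.deriv_eq
      rw [h1, deriv_add_const]
      rfl
    have hcpXX : ∀ x ∈ ball x0 r, ∀ y ∈ ball y0 r,
        cpX (cpX η) (x, y) = cpX (cpX η) (x, y0) := by
      intro x hx y hy
      have heq : (fun t => cpX η (t, y)) =ᶠ[nhds x] (fun t => cpX η (t, y0)) :=
        Filter.eventuallyEq_of_mem (isOpen_ball.mem_nhds hx) (fun t ht => hcpX t ht y hy)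
      exact heq.deriv_eq
    -- the master identity on the polydisc
    have hid : ∀ x ∈ ball x0 r, ∀ y ∈ ball y0 r,
        cpX (cpX η) (x, y0) + (6 * y^2 + x) * b0
          = 6 * (η (x, y0) + b0 * (y - y0))^2 + (x + C) := by
      intro x hx y hy
      have h1 := hE (x, y) (hmem hx hy)
      simp only at h1
      rw [hcpXX x hx y hy, hcpY x hx y hy, haff2 x hx y hy] at h1
      exact h1
    -- evaluate at y0, y0 ± r/2
    have hd : ((r : ℂ)/2) ≠ 0 := by
      simp only [ne_eq, div_eq_zero_iff]
      push_neg
      exact ⟨by exact_mod_cast hr.ne', by norm_num⟩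
    have hyp : (y0 + ((r : ℂ)/2)) ∈ ball y0 r := by
      simpa [Complex.dist_eq, abs_of_pos hr] using hr
    have hym : (y0 - ((r : ℂ)/2)) ∈ ball y0 r := by
      simpa [Complex.dist_eq, abs_of_pos hr] using hr
    set d := ((r : ℂ)/2)
    -- b0 = 1
    have hb1 : b0 = 1 := by
      have e0 := hid x0 hx00 y0 hy00
      have ep := hid x0 hx00 _ hyp
      have em := hid x0 hx00 _ hym
      have h12 : 12 * d^2 * b0 = 12 * d^2 * (b0 * b0) := by
        linear_combination ep + em - 2 * e0
      have h13 : b0 = b0 * b0 :=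
        mul_left_cancel₀ (mul_ne_zero (by norm_num) (pow_ne_zero 2 hd)) h12
      have := mul_right_cancel₀ hb0 (h13.symm.trans (one_mul b0).symm)
      exact this
    -- η (x, y0) = y0 on the x-ball
    have hu : ∀ x ∈ ball x0 r, η (x, y0) = y0 := by
      intro x hx
      have ep := hid x hx _ hyp
      have em := hid x hx _ hym
      rw [hb1] at ep em
      have h1 : 24 * d * y0 = 24 * d * η (x, y0) := by
        linear_combination ep - em
      exact (mul_left_cancel₀ (mul_ne_zero (by norm_num) hd) h1).symm
    -- hence η (x, y) = y on the polydisc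
    have hfinal : ∀ x ∈ ball x0 r, ∀ y ∈ ball y0 r, η (x, y) = y := by
      intro x hx y hy
      rw [haff2 x hx y hy, hu x hx, hb1]
      ring
    refine ⟨?_, hfinal x0 hx00 y0 hy00⟩
    -- C = 0 : the second x-derivative vanishes
    have hcx0 : ∀ x ∈ ball x0 r, cpX η (x, y0) = 0 := by
      intro x hx
      have heq : (fun t => η (t, y0)) =ᶠ[nhds x] (fun _ => y0) :=
        Filter.eventuallyEq_of_mem (isOpen_ball.mem_nhds hx) (fun t ht => hu t ht)
      have h1 : cpX η (x, y0) = deriv (fun _ : ℂ => y0) x := heq.deriv_eq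
      rw [h1, deriv_const]
    have hcxx0 : cpX (cpX η) (x0, y0) = 0 := by
      have heq : (fun t => cpX η (t, y0)) =ᶠ[nhds x0] (fun _ => (0 : ℂ)) :=
        Filter.eventuallyEq_of_mem (isOpen_ball.mem_nhds hx00) (fun t ht => hcx0 t ht)
      have h1 : cpX (cpX η) (x0, y0) = deriv (fun _ : ℂ => (0 : ℂ)) x0 := heq.deriv_eq
      rw [h1, deriv_const]
    have e0 := hid x0 hx00 y0 hy00
    rw [hcxx0, hb1, hu x0 hx00] at e0
    linear_combination -e0
  obtain ⟨q0, hq0⟩ := hΩc.nonempty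
  exact ⟨(key q0 hq0).1, fun q hq => (key q hq).2⟩
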